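/- Fix $C \ge 1$, $a, b > 0$, and $0 < \alpha < 1$ with $\frac{a + (C-1)b}{C} < 1 - \alpha$. Then the conclusion of the isolated-vertex lemma applied with threshold $1-\alpha$ gives: in the SBM graph $G_1\cap G_2 \sim SBM(n, \frac{a s_1 s_2 \log n}{n}, \frac{b s_1 s_2 \log n}{n})$ with the condition $\frac{(a+(C-1)b)s_1 s_2}{C} < 1 - \alpha$, each community contains at least $\frac{n^{\alpha}}{2C}$ isolated vertices with probability $1 - o(1)$, and therefore at least $\alpha \log_2 n \cdot (1 - o(1))$ bits of uncertainty remain about the identity of each such vertex under any estimator: any estimator of the position of a given isolated vertex succeeds with probability at most $\frac{2C}{n^{\alpha}}$. -/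

import Mathlib

open MeasureTheory Filter
open scoped ENNReal

/-- Edge probability for the SBM on `[n]`: `p` for intra-community pairs, `q` for
inter-community pairs (communities `{i : i.val / nC = k}` of size `nC`). -/
noncomputable def edgeP (n : ℕ) (p q : ℝ) (nC : ℕ) (e : Sym2 (Fin n)) : ℝ≥0∞ :=
  min (ENNReal.ofReal
    (Sym2.lift ⟨fun i j => if i.val / nC = j.val / nC then p else q,
      fun i j => by simp only [eq_comm]⟩ e)) 1

/-- The stochastic block model `SBM(n, p, q)` with communities of size `nC`. -/
noncomputable def sbm (n : ℕ) (p q : ℝ) (nC : ℕ) :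
    Measure (Sym2 (Fin n) → Bool) :=
  Measure.pi fun e => (PMF.bernoulli (edgeP n p q nC e).toNNReal
    (by simpa using ENNReal.toNNReal_mono ENNReal.one_ne_top (show edgeP n p q nC e ≤ 1 from min_le_right _ _))).toMeasure

/-- The number of isolated vertices in community `k`. -/
noncomputable def isoCount (n nC k : ℕ) (ω : Sym2 (Fin n) → Bool) : ℕ :=
  (Finset.univ.filter fun i : Fin n =>
    i.val / nC = k ∧ ∀ j : Fin n, j ≠ i → ω s(i, j) = false).card

lemma edgeP_le_one (n : ℕ) (p q : ℝ) (nC : ℕ) (e : Sym2 (Fin n)) :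
    edgeP n p q nC e ≤ 1 := min_le_right _ _

lemma edgeP_toNNReal_le_one (n : ℕ) (p q : ℝ) (nC : ℕ) (e : Sym2 (Fin n)) :
    (edgeP n p q nC e).toNNReal ≤ 1 := by
  simpa using ENNReal.toNNReal_mono ENNReal.one_ne_top (edgeP_le_one n p q nC e)

lemma sbm_cylinder (n : ℕ) (p q : ℝ) (nC : ℕ) (F : Finset (Sym2 (Fin n))) :
    sbm n p q nC {ω | ∀ e ∈ F, ω e = false} = ∏ e ∈ F, (1 - edgeP n p q nC e) := by
  have hset : {ω : Sym2 (Fin n) → Bool | ∀ e ∈ F, ω e = false}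
      = Set.pi Set.univ (fun e => if e ∈ F then {false} else Set.univ) := by
    ext ω
    simp only [Set.mem_setOf_eq, Set.mem_pi, Set.mem_univ, forall_true_left]
    constructor
    · intro h e
      by_cases he : e ∈ F <;> simp [he, h e]
    · intro h e he
      have := h e; simp [he] at this; exact this
  rw [sbm, hset, Measure.pi_pi]
  rw [show (fun e => (PMF.bernoulli (edgeP n p q nC e).toNNReal
    (edgeP_toNNReal_le_one n p q nC e)).toMeasure
        (if e ∈ F then {false} else Set.univ))
      = fun e => if e ∈ F then (1 - edgeP n p q nC e) else 1 from ?_]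
  · exact Fintype.prod_ite_mem F _
  · funext e
    by_cases he : e ∈ F
    · rw [if_pos he, if_pos he,
        PMF.toMeasure_apply_singleton _ _ (measurableSet_singleton _), PMF.bernoulli_apply]
      have hne : edgeP n p q nC e ≠ ⊤ := ne_top_of_le_ne_top ENNReal.one_ne_top (edgeP_le_one n p q nC e)
      simp [ENNReal.coe_sub, ENNReal.coe_toNNReal hne]
    · rw [if_neg he, if_neg he]; exact measure_univ

open Finset in
section
/-- the isolation event for vertex `i` -/
def st15A (n nC : ℕ) (i : Fin n) : Set (Sym2 (Fin n) → Bool) :=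
  {ω | ∀ j : Fin n, j ≠ i → ω s(i, j) = false}

/-- incident edges of `i` -/
def st15E (n : ℕ) (i : Fin n) : Finset (Sym2 (Fin n)) :=
  (Finset.univ.erase i).image (fun j => s(i, j))

lemma st15A_eq (n nC : ℕ) (i : Fin n) :
    st15A n nC i = {ω | ∀ e ∈ st15E n i, ω e = false} := by
  ext ω
  simp only [st15A, Set.mem_setOf_eq, st15E, Finset.mem_image, Finset.mem_erase,
    Finset.mem_univ, and_true]
  constructor
  · rintro h e ⟨j, hj, rfl⟩; exact h j hj
  · intro h j hj; exact h _ ⟨j, hj, rfl⟩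

lemma st15_inter_eq (n nC : ℕ) (i j : Fin n) :
    st15A n nC i ∩ st15A n nC j = {ω | ∀ e ∈ st15E n i ∪ st15E n j, ω e = false} := by
  rw [st15A_eq n nC i, st15A_eq n nC j]
  ext ω
  simp only [Set.mem_inter_iff, Set.mem_setOf_eq, Finset.mem_union]
  constructor
  · rintro ⟨h1, h2⟩ e (he | he); exacts [h1 e he, h2 e he]
  · intro h; exact ⟨fun e he => h e (Or.inl he), fun e he => h e (Or.inr he)⟩

lemma st15E_inter (n : ℕ) (i j : Fin n) (hij : i ≠ j) :
    st15E n i ∩ st15E n j = {s(i, j)} := by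
  ext e
  simp only [Finset.mem_inter, st15E, Finset.mem_image, Finset.mem_erase, Finset.mem_univ,
    and_true, Finset.mem_singleton]
  constructor
  · rintro ⟨⟨u, hu, rfl⟩, v, hv, hvu⟩
    rw [Sym2.eq_iff] at hvu
    rcases hvu with ⟨h1, h2⟩ | ⟨h1, h2⟩
    · exact absurd h1 (Ne.symm hij)
    · rw [h1]
  · rintro rfl
    exact ⟨⟨j, hij.symm, rfl⟩, i, hij, Sym2.eq_swap⟩

lemma st15E_prod_image {M : Type*} [CommMonoid M] (n : ℕ) (i : Fin n)
    (f : Sym2 (Fin n) → M) :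
    ∏ e ∈ st15E n i, f e = ∏ j ∈ Finset.univ.erase i, f s(i, j) := by
  rw [st15E, Finset.prod_image]
  intro x hx y hy hxy
  rw [Sym2.eq_iff] at hxy
  rcases hxy with ⟨-, h⟩ | ⟨h, -⟩
  · exact h
  · exact absurd h.symm (Finset.mem_erase.mp hy).1

lemma st15_edgeP_pair (n : ℕ) (p q : ℝ) (nC : ℕ) (hp : 0 ≤ p) (hp1 : p ≤ 1)
    (hq : 0 ≤ q) (hq1 : q ≤ 1) (i j : Fin n) :
    edgeP n p q nC s(i, j)
      = ENNReal.ofReal (if i.val / nC = j.val / nC then p else q) := by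
  rw [edgeP, Sym2.lift_mk]
  refine min_eq_left ?_
  rw [ENNReal.ofReal_le_one]
  show (if i.val / nC = j.val / nC then p else q) ≤ 1
  split <;> assumption

lemma st15_one_sub_edgeP (n : ℕ) (p q : ℝ) (nC : ℕ) (hp : 0 ≤ p) (hp1 : p ≤ 1)
    (hq : 0 ≤ q) (hq1 : q ≤ 1) (i j : Fin n) :
    1 - edgeP n p q nC s(i, j)
      = ENNReal.ofReal (1 - (if i.val / nC = j.val / nC then p else q)) := by
  have h0 : 0 ≤ (if i.val / nC = j.val / nC then p else q) := by positivity
  rw [st15_edgeP_pair n p q nC hp hp1 hq hq1, ENNReal.ofReal_sub _ h0, ENNReal.ofReal_one]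


lemma st15_card_community (C m k : ℕ) (hm : 0 < m) (hk : k < C) :
    (Finset.univ.filter fun j : Fin (C * m) => j.val / m = k).card = m := by
  have h : (Finset.univ.filter fun j : Fin (C * m) => j.val / m = k).card
      = ((Finset.Iio (C * m)).filter fun v => v / m = k).card := by
    rw [← Fin.map_valEmbedding_univ, Finset.filter_map, Finset.card_map]
    rfl
  rw [h]
  have h2 : ((Finset.Iio (C * m)).filter fun v => v / m = k)
      = Finset.Ico (k * m) (k * m + m) := by
    ext v
    simp only [Finset.mem_filter, Finset.mem_Iio, Finset.mem_Ico]
    constructor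
    · rintro ⟨hv, rfl⟩
      refine ⟨Nat.div_mul_le_self v m, ?_⟩
      calc v = m * (v / m) + v % m := (Nat.div_add_mod v m).symm
        _ < m * (v / m) + m := Nat.add_lt_add_left (Nat.mod_lt v hm) _
        _ = v / m * m + m := by rw [mul_comm]
    · rintro ⟨h1, h2⟩
      constructor
      · calc v < k * m + m := h2
          _ = (k + 1) * m := by ring
          _ ≤ C * m := Nat.mul_le_mul_right m hk
      · have h3 : v < (k + 1) * m := by
          calc v < k * m + m := h2
            _ = (k + 1) * m := by ring
        exact Nat.div_eq_of_lt_le h1 h3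
  rw [h2, Nat.card_Ico]; omega

lemma st15_same_card (C m : ℕ) (hm : 0 < m) (i : Fin (C * m)) :
    ((Finset.univ.erase i).filter fun j : Fin (C * m) => j.val / m = i.val / m).card
      = m - 1 := by
  rw [Finset.filter_erase, Finset.card_erase_of_mem]
  · rw [st15_card_community C m (i.val / m) hm
      (Nat.div_lt_iff_lt_mul hm |>.mpr (by simpa using i.isLt))]
  · simp

lemma st15_other_card (C m : ℕ) (hm : 0 < m) (i : Fin (C * m)) :
    ((Finset.univ.erase i).filter fun j : Fin (C * m) => ¬ j.val / m = i.val / m).card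
      = C * m - m := by
  have he : ((Finset.univ.erase i).filter fun j : Fin (C * m) => ¬ j.val / m = i.val / m)
      = Finset.univ.filter fun j : Fin (C * m) => ¬ j.val / m = i.val / m := by
    ext j
    simp only [Finset.mem_filter, Finset.mem_erase, Finset.mem_univ, true_and, and_true]
    constructor
    · tauto
    · intro hj; exact ⟨fun h => hj (h ▸ rfl), hj⟩
  rw [he]
  have := Finset.card_filter_add_card_filter_not
    (s := (Finset.univ : Finset (Fin (C * m)))) (p := fun j => j.val / m = i.val / m)
  have hcc := st15_card_community C m (i.val / m) hm
      (Nat.div_lt_iff_lt_mul hm |>.mpr (by simpa using i.isLt))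
  simp only [Finset.card_univ, Fintype.card_fin] at this
  omega

lemma st15_prod_E (p q : ℝ) (hp : 0 ≤ p) (hp1 : p ≤ 1) (hq : 0 ≤ q) (hq1 : q ≤ 1)
    (C m : ℕ) (hm : 0 < m) (i : Fin (C * m)) :
    ∏ e ∈ st15E (C * m) i, (1 - edgeP (C * m) p q m e)
      = ENNReal.ofReal ((1 - p) ^ (m - 1) * (1 - q) ^ (C * m - m)) := by
  rw [st15E_prod_image]
  have hcong : ∀ j ∈ Finset.univ.erase i, 1 - edgeP (C * m) p q m s(i, j)
      = ENNReal.ofReal (1 - (if i.val / m = j.val / m then p else q)) :=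
    fun j _ => st15_one_sub_edgeP _ p q m hp hp1 hq hq1 i j
  rw [Finset.prod_congr rfl hcong, ← ENNReal.ofReal_prod_of_nonneg
    (fun j _ => by split <;> linarith)]
  congr 1
  rw [← Finset.prod_filter_mul_prod_filter_not (Finset.univ.erase i)
    (fun j => i.val / m = j.val / m)]
  rw [Finset.prod_congr rfl (fun j hj => by
      rw [if_pos (Finset.mem_filter.mp hj).2]),
    Finset.prod_congr (rfl :
        (Finset.univ.erase i).filter (fun j => ¬ i.val / m = j.val / m) = _)
      (fun j hj => by rw [if_neg (Finset.mem_filter.mp hj).2]),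
    Finset.prod_const, Finset.prod_const]
  congr 1
  · congr 1
    rw [← st15_same_card C m hm i]
    congr 1
    ext j; simp [eq_comm]
  · congr 1
    rw [← st15_other_card C m hm i]
    congr 1
    ext j; simp [eq_comm]

lemma st15_measure_A (p q : ℝ) (hp : 0 ≤ p) (hp1 : p ≤ 1) (hq : 0 ≤ q) (hq1 : q ≤ 1)
    (C m : ℕ) (hm : 0 < m) (i : Fin (C * m)) :
    sbm (C * m) p q m (st15A (C * m) m i)
      = ENNReal.ofReal ((1 - p) ^ (m - 1) * (1 - q) ^ (C * m - m)) := by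
  rw [st15A_eq, sbm_cylinder, st15_prod_E p q hp hp1 hq hq1 C m hm i]

lemma st15_measure_inter (p q : ℝ) (hp : 0 ≤ p) (hp1 : p < 1) (hq : 0 ≤ q) (hq1 : q ≤ 1)
    (C m : ℕ) (hm : 0 < m) (i j : Fin (C * m)) (hij : i ≠ j)
    (hcom : i.val / m = j.val / m) :
    sbm (C * m) p q m (st15A (C * m) m i ∩ st15A (C * m) m j)
      = ENNReal.ofReal (((1 - p) ^ (m - 1) * (1 - q) ^ (C * m - m)) ^ 2 / (1 - p)) := by
  have hp1' : p ≤ 1 := hp1.le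
  set ρ := (1 - p) ^ (m - 1) * (1 - q) ^ (C * m - m) with hρ
  have h1p : (0:ℝ) < 1 - p := by linarith
  have hρ0 : 0 ≤ ρ := mul_nonneg (pow_nonneg h1p.le _) (pow_nonneg (by linarith) _)
  rw [st15_inter_eq, sbm_cylinder]
  have key := Finset.prod_union_inter (s₁ := st15E (C * m) i) (s₂ := st15E (C * m) j)
    (f := fun e => 1 - edgeP (C * m) p q m e)
  rw [st15E_inter _ i j hij, Finset.prod_singleton,
    st15_prod_E p q hp hp1' hq hq1 C m hm i, st15_prod_E p q hp hp1' hq hq1 C m hm j,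
    st15_one_sub_edgeP _ p q m hp hp1' hq hq1 i j, if_pos hcom] at key
  have hne : ENNReal.ofReal (1 - p) ≠ 0 := by
    simp [ENNReal.ofReal_eq_zero]; linarith
  rw [← ENNReal.mul_left_inj hne ENNReal.ofReal_ne_top]
  rw [key, ← ENNReal.ofReal_mul hρ0,
    ← ENNReal.ofReal_mul (div_nonneg (sq_nonneg ρ) h1p.le)]
  congr 1
  rw [div_mul_cancel₀ _ (ne_of_gt h1p), sq]

open ProbabilityTheory in
lemma st15_cheb (p q : ℝ) (hp : 0 ≤ p) (hp1 : p < 1) (hq : 0 ≤ q) (hq1 : q ≤ 1)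
    (C m k : ℕ) (hm : 0 < m) (hk : k < C) (ρ T : ℝ)
    (hρdef : ρ = (1 - p) ^ (m - 1) * (1 - q) ^ (C * m - m)) (hρ : 0 < ρ)
    (hT : T ≤ m * ρ / 2) :
    sbm (C * m) p q m {ω | (isoCount (C * m) m k ω : ℝ) < T}
      ≤ ENNReal.ofReal
          ((m * ρ + (m * ρ) ^ 2 * (p / (1 - p))) / (m * ρ / 2) ^ 2) := by
  classical
  set n := C * m with hn
  set μ := sbm n p q m with hμ
  set K : Finset (Fin n) := Finset.univ.filter (fun i => i.val / m = k) with hK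
  have hKcard : K.card = m := st15_card_community C m k hm hk
  have hKcom : ∀ i ∈ K, i.val / m = k := fun i hi => (Finset.mem_filter.mp hi).2
  haveI : IsProbabilityMeasure μ := by
    rw [hμ, sbm]; infer_instance
  set X : (Sym2 (Fin n) → Bool) → ℝ := fun ω => (isoCount n m k ω : ℝ) with hXdef
  have hmeasA : ∀ i : Fin n, MeasurableSet (st15A n m i) :=
    fun i => (Set.to_countable _).measurableSet
  -- X as a sum of indicators
  have hX : ∀ ω, X ω = ∑ i ∈ K, (st15A n m i).indicator (fun _ => (1:ℝ)) ω := by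
    intro ω
    have h1 : isoCount n m k ω
        = (K.filter (fun i => ω ∈ st15A n m i)).card := by
      rw [isoCount, ← Finset.filter_filter]
      congr 1
      refine Finset.filter_congr fun i _ => ?_
      simp [st15A]
    show ((isoCount n m k ω : ℝ)) = _
    rw [h1, Finset.card_filter]
    push_cast
    refine Finset.sum_congr rfl fun i _ => ?_
    by_cases h : ω ∈ st15A n m i <;> simp [h]
  have hρA : ∀ i ∈ K, μ (st15A n m i) = ENNReal.ofReal ρ := by
    intro i _
    rw [hμ, st15_measure_A p q hp hp1.le hq hq1 C m hm i, hρdef]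
  have hρAB : ∀ i ∈ K, ∀ j ∈ K, i ≠ j →
      μ (st15A n m i ∩ st15A n m j) = ENNReal.ofReal (ρ ^ 2 / (1 - p)) := by
    intro i hi j hj hij
    rw [hμ, st15_measure_inter p q hp hp1 hq hq1 C m hm i j hij
      ((hKcom i hi).trans (hKcom j hj).symm), hρdef]
  have h1p : (0:ℝ) < 1 - p := by linarith
  -- expectation
  have hE : ∫ ω, X ω ∂μ = m * ρ := by
    have hXfun : (fun ω => X ω) = fun ω => ∑ i ∈ K,
        (st15A n m i).indicator (fun _ => (1:ℝ)) ω := funext hX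
    have hint : ∀ i ∈ K, ∫ ω, (st15A n m i).indicator (fun _ => (1:ℝ)) ω ∂μ = ρ := by
      intro i hi
      rw [integral_indicator_const (1:ℝ) (hmeasA i), measureReal_def, hρA i hi,
        ENNReal.toReal_ofReal hρ.le, smul_eq_mul, mul_one]
    rw [hXfun, integral_finset_sum _ (fun i _ => Integrable.of_finite),
      Finset.sum_congr rfl hint, Finset.sum_const, hKcard, nsmul_eq_mul]
  -- second moment
  have hE2 : ∫ ω, (X ^ 2) ω ∂μ = m * ρ + (m * (m-1)) * (ρ ^ 2 / (1 - p)) := by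
    have hsq : (X ^ 2) = fun ω => ∑ i ∈ K, ∑ j ∈ K,
        ((st15A n m i) ∩ (st15A n m j)).indicator (fun _ => (1:ℝ)) ω := by
      funext ω
      rw [Pi.pow_apply, sq, hX ω, Finset.sum_mul_sum]
      refine Finset.sum_congr rfl fun i _ => Finset.sum_congr rfl fun j _ => ?_
      by_cases h1 : ω ∈ st15A n m i <;> by_cases h2 : ω ∈ st15A n m j <;>
        simp [Set.indicator_apply, Set.mem_inter_iff, h1, h2]
    have hinner : ∀ i ∈ K, ∫ ω, (∑ j ∈ K, ((st15A n m i) ∩ (st15A n m j)).indicator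
        (fun _ => (1:ℝ)) ω) ∂μ = ρ + ((m:ℝ) - 1) * (ρ ^ 2 / (1 - p)) := by
      intro i hi
      rw [integral_finset_sum _ (fun j _ => Integrable.of_finite)]
      have hterm : ∀ j ∈ K, ∫ ω, ((st15A n m i) ∩ (st15A n m j)).indicator
          (fun _ => (1:ℝ)) ω ∂μ = if j = i then ρ else ρ ^ 2 / (1 - p) := by
        intro j hj
        rw [integral_indicator_const (1:ℝ) ((hmeasA i).inter (hmeasA j)), smul_eq_mul,
          mul_one]
        by_cases hij : j = i
        · rw [if_pos hij, hij, Set.inter_self, measureReal_def, hρA i hi, ENNReal.toReal_ofReal hρ.le]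
        · rw [if_neg hij, measureReal_def, hρAB i hi j hj (Ne.symm hij), ENNReal.toReal_ofReal
            (div_nonneg (sq_nonneg ρ) h1p.le)]
      rw [Finset.sum_congr rfl hterm, ← Finset.sum_erase_add _ _ hi, if_pos rfl]
      rw [Finset.sum_congr rfl (fun j hj => if_neg (Finset.mem_erase.mp hj).1),
        Finset.sum_const, Finset.card_erase_of_mem hi, hKcard, nsmul_eq_mul]
      have hm1 : ((m - 1 : ℕ) : ℝ) = (m : ℝ) - 1 := by
        push_cast [Nat.one_le_iff_ne_zero.mpr hm.ne']
        ring
      rw [hm1]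
      ring
    rw [hsq, integral_finset_sum _ (fun i _ => Integrable.of_finite),
      Finset.sum_congr rfl hinner, Finset.sum_const, hKcard, nsmul_eq_mul]
    ring
  -- Memℒp
  have hXmeas : AEStronglyMeasurable X μ :=
    (measurable_of_finite X).aestronglyMeasurable
  have hXbdd : ∀ᵐ ω ∂μ, X ω ∈ Set.Icc (0:ℝ) n := by
    refine ae_of_all _ fun ω => ⟨by positivity, ?_⟩
    have : isoCount n m k ω ≤ n := by
      rw [isoCount]
      calc (Finset.univ.filter _).card ≤ (Finset.univ : Finset (Fin n)).card :=
        Finset.card_filter_le _ _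
      _ = n := by simp
    show ((isoCount n m k ω : ℝ)) ≤ (n : ℝ)
    exact_mod_cast this
  have hX2 : MemLp X 2 μ := memLp_of_bounded hXbdd hXmeas 2
  -- variance bound
  have hvar : variance X μ ≤ m * ρ + (m * ρ) ^ 2 * (p / (1 - p)) := by
    rw [variance_eq_sub hX2, hE2, hE]
    have hmm : (m : ℝ) * (m - 1) ≤ (m:ℝ) ^ 2 := by linarith [(Nat.cast_nonneg m : (0:ℝ) ≤ m)]
    have h2 : (m : ℝ) * (m-1) * (ρ ^ 2 / (1 - p)) - ((m:ℝ) * ρ) ^ 2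
        ≤ (m * ρ) ^ 2 * (p / (1 - p)) := by
      rw [div_eq_mul_inv, div_eq_mul_inv]
      have hinv : (0:ℝ) < (1 - p)⁻¹ := by positivity
      have key : ((m:ℝ) * ρ) ^ 2 * (1 - p)⁻¹ - ((m:ℝ) * ρ) ^ 2
          = (m * ρ) ^ 2 * (p * (1 - p)⁻¹) := by
        field_simp
        ring
      have hmm2 := mul_le_mul_of_nonneg_right hmm (mul_nonneg (sq_nonneg ρ) hinv.le)
      linarith [key, hmm2]
    linarith
  -- Chebyshev
  have hc : (0:ℝ) < m * ρ / 2 := by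
    have : (0:ℝ) < m := by exact_mod_cast hm
    positivity
  have hcheb := meas_ge_le_variance_div_sq (μ := μ) hX2 hc
  have hsub : {ω | (isoCount n m k ω : ℝ) < T}
      ⊆ {ω | m * ρ / 2 ≤ |X ω - ∫ x, X x ∂μ|} := by
    intro ω hω
    simp only [Set.mem_setOf_eq] at hω ⊢
    rw [hE]
    have h1 : X ω < m * ρ / 2 := lt_of_lt_of_le hω hT
    rw [abs_sub_comm, abs_of_nonneg (by linarith [hω, hT]; )]
    · linarith
  calc μ {ω | (isoCount n m k ω : ℝ) < T}
      ≤ μ {ω | m * ρ / 2 ≤ |X ω - ∫ x, X x ∂μ|} := measure_mono hsub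
    _ ≤ ENNReal.ofReal (variance X μ / (m * ρ / 2) ^ 2) := hcheb
    _ ≤ _ := ENNReal.ofReal_le_ofReal
        ((div_le_div_iff_of_pos_right (by positivity)).mpr hvar)

end
lemma st15_exp_le (x : ℝ) (hx : 0 ≤ x) (hx1 : x < 1) :
    Real.exp (-(x / (1 - x))) ≤ 1 - x := by
  have h1 : (0:ℝ) < 1 - x := by linarith
  have h2 : (1 - x)⁻¹ ≤ Real.exp (x / (1 - x)) := by
    have h3 := Real.add_one_le_exp (x / (1 - x))
    have h4 : (1 - x)⁻¹ = x / (1 - x) + 1 := by field_simp; ring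
    linarith
  rw [Real.exp_neg]
  calc (Real.exp (x / (1 - x)))⁻¹ ≤ ((1 - x)⁻¹)⁻¹ := by
        exact inv_anti₀ (by positivity) h2
    _ = 1 - x := inv_inv _

set_option maxHeartbeats 3200000 in
/-- Anonymity in the intersection graph: if `(a + (C-1)b) s1 s2 / C < 1 - α` with `α > 0`,
then (i) with probability `1 - o(1)` every community of the intersection graph
`G₁ ∩ G₂ ∼ SBM(n, a s1 s2 log n / n, b s1 s2 log n / n)` (with `n = C·m`) contains at least
`n^α / (2C)` isolated vertices; (ii) this amounts to `(1-o(1)) α log₂ n` bits of uncertainty;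
(iii) under a uniform posterior over any set of at least `n^α/(2C)` mutually confusable
vertices, any estimator of the identity of a given vertex succeeds with probability at most
`2C / n^α`. -/
theorem stmt_15 (a b α s1 s2 : ℝ) (C : ℕ) (ha : 0 < a) (hb : 0 < b) (hC : 0 < C)
    (hs1 : 0 < s1) (hs1' : s1 ≤ 1) (hs2 : 0 < s2) (hs2' : s2 ≤ 1) (hα : 0 < α)
    (hcond : (a + ((C : ℝ) - 1) * b) * s1 * s2 / C < 1 - α) :
    Tendsto (fun m : ℕ =>
      sbm (C * m) (a * s1 * s2 * Real.log (C * m) / (C * m))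
          (b * s1 * s2 * Real.log (C * m) / (C * m)) m
        {ω | ∃ k < C, (isoCount (C * m) m k ω : ℝ) < ((C * m : ℕ) : ℝ) ^ α / (2 * C)})
      atTop (nhds 0) ∧
    (∀ ε > 0, ∀ᶠ m : ℕ in atTop,
      (1 - ε) * (α * Real.logb 2 ((C * m : ℕ) : ℝ)) ≤
        Real.logb 2 (((C * m : ℕ) : ℝ) ^ α / (2 * C))) ∧
    (∀ m : ℕ, 0 < m → ∀ (s : Finset (Fin (C * m))) (hs : s.Nonempty)
        (est : Fin (C * m)),
      ((C * m : ℕ) : ℝ) ^ α / (2 * C) ≤ s.card →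
      ((PMF.uniformOfFinset s hs) est).toReal ≤ 2 * C / ((C * m : ℕ) : ℝ) ^ α) := by
  have hC1 : (1:ℝ) ≤ C := by exact_mod_cast hC
  have hCR : (0:ℝ) < C := by linarith
  have hcastm : ∀ m : ℕ, ((C * m : ℕ) : ℝ) = (C:ℝ) * (m:ℝ) := fun m => by push_cast; ring
  have hN : Tendsto (fun m : ℕ => ((C * m : ℕ) : ℝ)) atTop atTop := by
    refine tendsto_natCast_atTop_atTop.comp ?_
    exact tendsto_atTop_mono (fun m => Nat.le_mul_of_pos_left m hC) tendsto_id
  have hx : Tendsto (fun m : ℕ => (C:ℝ) * (m:ℝ)) atTop atTop :=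
    hN.congr fun m => hcastm m
  have hlogdiv : Tendsto (fun x : ℝ => Real.log x / x) atTop (nhds 0) := by
    simpa using Real.tendsto_pow_log_div_mul_add_atTop 1 0 1 one_ne_zero
  have hptend : Tendsto
      (fun m : ℕ => a * s1 * s2 * Real.log ((C:ℝ) * m) / ((C:ℝ) * m)) atTop (nhds 0) := by
    have h := (hlogdiv.comp hx).const_mul (a * s1 * s2)
    simp only [Function.comp] at h
    have h2 : (fun m : ℕ => a * s1 * s2 * Real.log ((C:ℝ) * m) / ((C:ℝ) * m))
        = fun m : ℕ => a * s1 * s2 * (Real.log ((C:ℝ) * m) / ((C:ℝ) * m)) := by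
      funext m; ring
    rw [h2]
    simpa using h
  have hqtend : Tendsto
      (fun m : ℕ => b * s1 * s2 * Real.log ((C:ℝ) * m) / ((C:ℝ) * m)) atTop (nhds 0) := by
    have h := (hlogdiv.comp hx).const_mul (b * s1 * s2)
    simp only [Function.comp] at h
    have h2 : (fun m : ℕ => b * s1 * s2 * Real.log ((C:ℝ) * m) / ((C:ℝ) * m))
        = fun m : ℕ => b * s1 * s2 * (Real.log ((C:ℝ) * m) / ((C:ℝ) * m)) := by
      funext m; ring
    rw [h2]
    simpa using h
  refine ⟨?_, ?_, ?_⟩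
  · -- part (i)
    set c : ℝ := (a + ((C : ℝ) - 1) * b) * s1 * s2 / C with hcdef
    have hc0 : 0 < c := by
      have h1 : (0:ℝ) < a + ((C:ℝ) - 1) * b := by
        have h2 := mul_nonneg (by linarith : (0:ℝ) ≤ (C:ℝ) - 1) hb.le
        linarith
      exact div_pos (mul_pos (mul_pos h1 hs1) hs2) hCR
    set c' : ℝ := (c + (1 - α)) / 2 with hc'def
    have hcc' : c < c' := by rw [hc'def]; linarith
    have hc'α : c' < 1 - α := by rw [hc'def]; linarith
    have hc'0 : 0 < c' := by linarith
    set ε₀ : ℝ := min (1 - c / c') (1/2) with hε₀def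
    have hccpos : 0 < c / c' := div_pos hc0 hc'0
    have hcc1 : c / c' < 1 := (div_lt_one hc'0).mpr hcc'
    have hε₀pos : 0 < ε₀ := lt_min (by linarith) (by norm_num)
    have hε₀half : ε₀ ≤ 1/2 := min_le_right _ _
    have h1ε₀ : 0 < 1 - ε₀ := by linarith
    have hkey : c / (1 - ε₀) ≤ c' := by
      have h1 : c / c' ≤ 1 - ε₀ := by
        have := min_le_left (1 - c / c') (1/2)
        rw [hε₀def]; linarith [min_le_left (1 - c / c') (1/2)]
      calc c / (1 - ε₀) ≤ c / (c / c') := by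
            exact div_le_div_of_nonneg_left hc0.le hccpos h1
        _ = c' := by field_simp
    -- the dominating sequence
    set g : ℕ → ℝ := fun m => (C:ℝ) *
      (8 * (C:ℝ) / ((C:ℝ) * (m:ℝ)) ^ α +
        8 * (a * s1 * s2 * Real.log ((C:ℝ) * m) / ((C:ℝ) * m))) with hgdef
    have hgtend : Tendsto g atTop (nhds 0) := by
      have h1 : Tendsto (fun m : ℕ => ((C:ℝ) * (m:ℝ)) ^ α) atTop atTop :=
        (tendsto_rpow_atTop hα).comp hx
      have h2 : Tendsto (fun m : ℕ => 8 * (C:ℝ) / ((C:ℝ) * (m:ℝ)) ^ α) atTop (nhds 0) :=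
        tendsto_const_nhds.div_atTop h1
      have h3 := (h2.add (hptend.const_mul 8)).const_mul (C:ℝ)
      simpa only [mul_zero, add_zero, zero_add] using h3
    refine tendsto_of_tendsto_of_tendsto_of_le_of_le' tendsto_const_nhds
      (by simpa using ENNReal.tendsto_ofReal hgtend)
      (Eventually.of_forall fun m => zero_le) ?_
    filter_upwards [eventually_gt_atTop 0, hN.eventually (eventually_ge_atTop 1),
      hptend.eventually_lt_const hε₀pos, hqtend.eventually_lt_const hε₀pos]
      with m hm hN1 hpε hqε
    set N : ℝ := ((C * m : ℕ) : ℝ) with hNdef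
    have hNc : N = (C:ℝ) * m := hcastm m
    have hNpos : (0:ℝ) < N := lt_of_lt_of_le one_pos hN1
    set L : ℝ := Real.log ((C:ℝ) * m) with hLdef
    have hLN : Real.log N = L := by rw [hNc]
    have hL0 : 0 ≤ L := by rw [← hLN]; exact Real.log_nonneg hN1
    set pm : ℝ := a * s1 * s2 * Real.log ((C:ℝ) * m) / ((C:ℝ) * m) with hpmdef
    set qm : ℝ := b * s1 * s2 * Real.log ((C:ℝ) * m) / ((C:ℝ) * m) with hqmdef
    have hmR : (0:ℝ) < m := by exact_mod_cast hm
    have hp0 : 0 ≤ pm := by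
      rw [hpmdef, ← hLdef]
      exact div_nonneg (mul_nonneg (by positivity) hL0) (by positivity)
    have hq0 : 0 ≤ qm := by
      rw [hqmdef, ← hLdef]
      exact div_nonneg (mul_nonneg (by positivity) hL0) (by positivity)
    have hp1 : pm < 1 := by linarith [hpε, hε₀half]
    have hq1 : qm < 1 := by linarith [hqε, hε₀half]
    set ρ : ℝ := (1 - pm) ^ (m - 1) * (1 - qm) ^ (C * m - m) with hρdef
    have hρpos : 0 < ρ :=
      mul_pos (pow_pos (by linarith) _) (pow_pos (by linarith) _)
    -- lower bound on ρ
    have hpmN : (m:ℝ) * pm = a * s1 * s2 * L / C := by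
      rw [hpmdef, ← hLdef]; field_simp
    have hqmN : (m:ℝ) * qm = b * s1 * s2 * L / C := by
      rw [hqmdef, ← hLdef]; field_simp
    have hsum_le : ((m - 1 : ℕ):ℝ) * (pm / (1 - pm)) + ((C * m - m : ℕ):ℝ) * (qm / (1 - qm))
        ≤ c' * L := by
      have hm1 : ((m - 1 : ℕ):ℝ) ≤ (m:ℝ) := by
        exact_mod_cast Nat.cast_le.mpr (Nat.sub_le m 1)
      have hCm : ((C * m - m : ℕ):ℝ) = ((C:ℝ) - 1) * m := by
        have hle : m ≤ C * m := Nat.le_mul_of_pos_left m hC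
        push_cast [Nat.cast_sub hle]
        ring
      have hpp : pm / (1 - pm) ≤ pm / (1 - ε₀) :=
        div_le_div_of_nonneg_left hp0 h1ε₀ (by linarith)
      have hqq : qm / (1 - qm) ≤ qm / (1 - ε₀) :=
        div_le_div_of_nonneg_left hq0 h1ε₀ (by linarith)
      have hnum : (m:ℝ) * pm + ((C:ℝ) - 1) * m * qm = c * L := by
        rw [hcdef]
        have h1 : ((C:ℝ) - 1) * m * qm = ((C:ℝ) - 1) * (m * qm) := by ring
        rw [h1, hpmN, hqmN]
        field_simp
      have step1 : ((m - 1 : ℕ):ℝ) * (pm / (1 - pm)) + ((C * m - m : ℕ):ℝ) * (qm / (1 - qm))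
          ≤ ((m:ℝ) * pm + ((C:ℝ) - 1) * m * qm) / (1 - ε₀) := by
        rw [hCm]
        have t1 : ((m - 1 : ℕ):ℝ) * (pm / (1 - pm)) ≤ (m:ℝ) * (pm / (1 - ε₀)) := by
          apply mul_le_mul hm1 hpp (div_nonneg hp0 (by linarith)) hmR.le
        have t2 : ((C:ℝ) - 1) * m * (qm / (1 - qm)) ≤ ((C:ℝ) - 1) * m * (qm / (1 - ε₀)) := by
          apply mul_le_mul_of_nonneg_left hqq
          have : (0:ℝ) ≤ (C:ℝ) - 1 := by linarith
          positivity
        have t3 : (m:ℝ) * (pm / (1 - ε₀)) + ((C:ℝ) - 1) * m * (qm / (1 - ε₀))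
            = ((m:ℝ) * pm + ((C:ℝ) - 1) * m * qm) / (1 - ε₀) := by
          field_simp
        linarith
      have step2 : ((m:ℝ) * pm + ((C:ℝ) - 1) * m * qm) / (1 - ε₀) ≤ c' * L := by
        rw [hnum]
        calc c * L / (1 - ε₀) = (c / (1 - ε₀)) * L := by ring
          _ ≤ c' * L := mul_le_mul_of_nonneg_right hkey hL0
      linarith
    have hρlb : Real.exp (-(c' * L)) ≤ ρ := by
      have e1 : Real.exp (-(((m - 1 : ℕ):ℝ) * (pm / (1 - pm)))) ≤ (1 - pm) ^ (m - 1) := by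
        rw [show -(((m - 1 : ℕ):ℝ) * (pm / (1 - pm)))
            = ((m - 1 : ℕ):ℝ) * (-(pm / (1 - pm))) by ring, Real.exp_nat_mul]
        exact pow_le_pow_left₀ (Real.exp_nonneg _) (st15_exp_le pm hp0 hp1) _
      have e2 : Real.exp (-(((C * m - m : ℕ):ℝ) * (qm / (1 - qm))))
          ≤ (1 - qm) ^ (C * m - m) := by
        rw [show -(((C * m - m : ℕ):ℝ) * (qm / (1 - qm)))
            = ((C * m - m : ℕ):ℝ) * (-(qm / (1 - qm))) by ring, Real.exp_nat_mul]
        exact pow_le_pow_left₀ (Real.exp_nonneg _) (st15_exp_le qm hq0 hq1) _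
      have e3 : Real.exp (-(((m - 1 : ℕ):ℝ) * (pm / (1 - pm))))
            * Real.exp (-(((C * m - m : ℕ):ℝ) * (qm / (1 - qm))))
          = Real.exp (-(((m - 1 : ℕ):ℝ) * (pm / (1 - pm))
            + ((C * m - m : ℕ):ℝ) * (qm / (1 - qm)))) := by
        rw [← Real.exp_add]; ring_nf
      have e4 : Real.exp (-(c' * L)) ≤ Real.exp (-(((m - 1 : ℕ):ℝ) * (pm / (1 - pm))
            + ((C * m - m : ℕ):ℝ) * (qm / (1 - qm)))) :=
        Real.exp_le_exp.mpr (by linarith)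
      calc Real.exp (-(c' * L)) ≤ _ := e4
        _ = _ := e3.symm
        _ ≤ ρ := by
          rw [hρdef]
          exact mul_le_mul e1 e2 (Real.exp_nonneg _) (pow_nonneg (by linarith) _)
    have hNα : N ^ (α - 1) ≤ ρ := by
      have h1 : N ^ (α - 1) = Real.exp (Real.log N * (α - 1)) :=
        Real.rpow_def_of_pos hNpos _
      rw [h1, hLN]
      refine le_trans (Real.exp_le_exp.mpr ?_) hρlb
      have hh : 0 ≤ L * (1 - α - c') := mul_nonneg hL0 (by linarith)
      linarith [hh]
    have hmρ : N ^ α / C ≤ (m:ℝ) * ρ := by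
      have h1 : (m:ℝ) * N ^ (α - 1) ≤ (m:ℝ) * ρ := mul_le_mul_of_nonneg_left hNα hmR.le
      have h2 : (m:ℝ) * N ^ (α - 1) = N ^ α / C := by
        rw [Real.rpow_sub hNpos, Real.rpow_one, hNc]
        field_simp
      linarith
    have hNαpos : (0:ℝ) < N ^ α := Real.rpow_pos_of_pos hNpos α
    have hT : N ^ α / (2 * C) ≤ (m:ℝ) * ρ / 2 := by
      have : N ^ α / (2 * C) = (N ^ α / C) / 2 := by ring
      rw [this]
      linarith
    -- union bound and Chebyshev
    have hU : {ω : Sym2 (Fin (C * m)) → Bool |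
          ∃ k < C, (isoCount (C * m) m k ω : ℝ) < N ^ α / (2 * C)}
        = ⋃ k ∈ Finset.range C,
          {ω | (isoCount (C * m) m k ω : ℝ) < N ^ α / (2 * C)} := by
      ext ω; simp [Finset.mem_range]
    have hmρpos : (0:ℝ) < (m:ℝ) * ρ := mul_pos hmR hρpos
    have hperk : ∀ k ∈ Finset.range C,
        sbm (C * m) pm qm m {ω | (isoCount (C * m) m k ω : ℝ) < N ^ α / (2 * C)}
          ≤ ENNReal.ofReal (8 * C / N ^ α + 8 * pm) := by
      intro k hk
      rw [Finset.mem_range] at hk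
      refine le_trans (st15_cheb pm qm hp0 hp1 hq0 hq1.le C m k hm hk ρ
        (N ^ α / (2 * C)) hρdef hρpos hT) (ENNReal.ofReal_le_ofReal ?_)
      have hBeq : ((m:ℝ) * ρ + ((m:ℝ) * ρ) ^ 2 * (pm / (1 - pm))) / ((m:ℝ) * ρ / 2) ^ 2
          = 4 / ((m:ℝ) * ρ) + 4 * (pm / (1 - pm)) := by
        field_simp
        ring
      rw [hBeq]
      have hNαC : (0:ℝ) < N ^ α / C := by positivity
      have b1 : 4 / ((m:ℝ) * ρ) ≤ 8 * C / N ^ α := by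
        calc (4:ℝ) / ((m:ℝ) * ρ) ≤ 4 / (N ^ α / C) :=
              div_le_div_of_nonneg_left (by norm_num) hNαC hmρ
          _ = 4 * C / N ^ α := by field_simp
          _ ≤ 8 * C / N ^ α := by
              apply div_le_div_of_nonneg_right ?_ hNαpos.le
              linarith [hCR.le]
      have b2 : 4 * (pm / (1 - pm)) ≤ 8 * pm := by
        have h1 : pm / (1 - pm) ≤ pm / (1/2) :=
          div_le_div_of_nonneg_left hp0 (by norm_num) (by linarith [hpε, hε₀half])
        have h2 : pm / (1/2) = 2 * pm := by ring
        linarith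
      linarith
    calc sbm (C * m) pm qm m {ω | ∃ k < C,
            (isoCount (C * m) m k ω : ℝ) < N ^ α / (2 * C)}
        = sbm (C * m) pm qm m (⋃ k ∈ Finset.range C,
            {ω | (isoCount (C * m) m k ω : ℝ) < N ^ α / (2 * C)}) := by rw [hU]
      _ ≤ ∑ k ∈ Finset.range C,
            sbm (C * m) pm qm m {ω | (isoCount (C * m) m k ω : ℝ) < N ^ α / (2 * C)} :=
          measure_biUnion_finset_le _ _
      _ ≤ ∑ k ∈ Finset.range C, ENNReal.ofReal (8 * C / N ^ α + 8 * pm) :=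
          Finset.sum_le_sum hperk
      _ = ENNReal.ofReal (g m) := by
          rw [Finset.sum_const, Finset.card_range, nsmul_eq_mul, hgdef]
          rw [ENNReal.ofReal_mul (by positivity)]
          congr 1
          · exact (ENNReal.ofReal_natCast C).symm
          · rw [hNc]
  · -- part (ii)
    intro ε hε
    have hlogb : Tendsto (fun m : ℕ => Real.logb 2 ((C * m : ℕ) : ℝ)) atTop atTop :=
      (Real.tendsto_logb_atTop one_lt_two).comp hN
    have h2C : (0:ℝ) < 2 * C := by positivity
    filter_upwards [hlogb.eventually (eventually_ge_atTop
        (max 0 (Real.logb 2 (2 * C) / (ε * α)))), hN.eventually (eventually_ge_atTop 1)]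
      with m hlb hN1
    have hNpos : (0:ℝ) < ((C * m : ℕ) : ℝ) := lt_of_lt_of_le one_pos hN1
    have hNαpos : (0:ℝ) < ((C * m : ℕ) : ℝ) ^ α := Real.rpow_pos_of_pos hNpos α
    have hsplit : Real.logb 2 (((C * m : ℕ) : ℝ) ^ α / (2 * C))
        = α * Real.logb 2 ((C * m : ℕ) : ℝ) - Real.logb 2 (2 * C) := by
      rw [Real.logb_div hNαpos.ne' h2C.ne']
      congr 1
      rw [Real.logb, Real.logb, Real.log_rpow hNpos]
      ring
    rw [hsplit]
    have h1 : Real.logb 2 (2 * C) / (ε * α) ≤ Real.logb 2 ((C * m : ℕ) : ℝ) :=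
      le_trans (le_max_right _ _) hlb
    have h2 : Real.logb 2 (2 * C) ≤ ε * α * Real.logb 2 ((C * m : ℕ) : ℝ) := by
      have hεα : (0:ℝ) < ε * α := mul_pos hε hα
      calc Real.logb 2 (2 * C) = (Real.logb 2 (2 * C) / (ε * α)) * (ε * α) := by
            field_simp
        _ ≤ Real.logb 2 ((C * m : ℕ) : ℝ) * (ε * α) :=
            mul_le_mul_of_nonneg_right h1 hεα.le
        _ = ε * α * Real.logb 2 ((C * m : ℕ) : ℝ) := by ring
    linarith
  · -- part (iii)
    intro m hm s hs est hcard
    have hNpos : (0:ℝ) < ((C * m : ℕ) : ℝ) := by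
      have : 0 < C * m := Nat.mul_pos hC hm
      exact_mod_cast this
    have hNαpos : (0:ℝ) < ((C * m : ℕ) : ℝ) ^ α := Real.rpow_pos_of_pos hNpos α
    have hcard0 : (0:ℝ) < (s.card : ℝ) := lt_of_lt_of_le (by positivity) hcard
    rw [PMF.uniformOfFinset_apply]
    split_ifs with hmem
    · rw [ENNReal.toReal_inv, ENNReal.toReal_natCast]
      rw [inv_eq_one_div, div_le_div_iff₀ hcard0 hNαpos]
      have := (div_le_iff₀ (by positivity : (0:ℝ) < 2 * C)).mp hcard
      linarith
    · simp only [ENNReal.toReal_zero]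
      positivity
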